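/- Kronecker's theorem: if λ₁, ..., λ_N are real numbers linearly independent over ℚ, then for any real α₁, ..., α_N and any ε > 0 there exists x₀ ∈ ℝ with ‖x₀λ_n − α_n‖ < ε for all n ≤ N. -/

import Mathlib

set_option maxHeartbeats 1000000
open Complex Finset Real

noncomputable def ee (t : ℝ) : ℂ := Complex.exp (t * Complex.I)

lemma ee_add (s t : ℝ) : ee (s + t) = ee s * ee t := by
  simp [ee, ← Complex.exp_add]; ring_nf

lemma ee_zero : ee 0 = 1 := by simp [ee]

lemma abs_ee (t : ℝ) : ‖ee t‖ = 1 := Complex.norm_exp_ofReal_mul_I t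

lemma conj_ee (t : ℝ) : (starRingEnd ℂ) (ee t) = ee (-t) := by
  rw [ee, ee, ← Complex.exp_conj]; congr 1; simp

lemma ee_pow (t : ℝ) (j : ℕ) : ee t ^ j = ee (j * t) := by
  simp [ee, ← Complex.exp_nat_mul]; ring_nf

lemma ee_sum {ι : Type*} (s : Finset ι) (f : ι → ℝ) :
    ∏ i ∈ s, ee (f i) = ee (∑ i ∈ s, f i) := by
  simp only [ee, ← Complex.exp_sum]
  congr 1
  push_cast
  rw [Finset.sum_mul]

lemma continuous_ee {g : ℝ → ℝ} (hg : Continuous g) : Continuous fun x => ee (g x) := by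
  unfold ee; fun_prop

lemma normSq_one_add_ee (t : ℝ) : Complex.normSq (1 + ee t) = 2 + 2 * Real.cos t := by
  rw [ee, Complex.exp_mul_I, Complex.normSq_apply]
  simp only [Complex.add_re, Complex.add_im, Complex.one_re, Complex.one_im,
    Complex.cos_ofReal_re, Complex.sin_ofReal_re, Complex.mul_re, Complex.mul_im,
    Complex.I_re, Complex.I_im, Complex.cos_ofReal_im, Complex.sin_ofReal_im]
  ring_nf
  nlinarith [Real.sin_sq_add_cos_sq t]

lemma mul_conj_ee (t : ℝ) : ee t * (starRingEnd ℂ) (ee t) = 1 := by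
  rw [conj_ee, ← ee_add]; simp [ee_zero]

lemma norm_intervalIntegral_ee {δ : ℝ} (hδ : δ ≠ 0) (T : ℝ) :
    ‖∫ x in (0:ℝ)..T, ee (x * δ)‖ ≤ 2 / |δ| := by
  have h1 : ∀ x : ℝ, ee (x * δ) = Complex.exp ((δ * Complex.I) * x) := by
    intro x; unfold ee; push_cast; ring_nf
  have hc : (δ : ℂ) * Complex.I ≠ 0 := by
    simp [Complex.ext_iff, hδ]
  rw [show (∫ x in (0:ℝ)..T, ee (x * δ)) = ∫ x in (0:ℝ)..T, Complex.exp ((δ * Complex.I) * x) by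
    simp_rw [h1]]
  rw [integral_exp_mul_complex hc]
  rw [norm_div]
  have h2 : ‖(δ:ℂ) * Complex.I‖ = |δ| := by
    simp
  rw [h2]
  gcongr
  have : ‖Complex.exp ((δ:ℂ) * Complex.I * T)‖ = 1 := by
    rw [show (δ:ℂ) * Complex.I * T = (((δ * T : ℝ)):ℂ) * Complex.I by push_cast; ring]
    exact Complex.norm_exp_ofReal_mul_I _
  calc ‖Complex.exp ((δ:ℂ) * Complex.I * ↑T) - Complex.exp ((δ:ℂ) * Complex.I * ↑0)‖
      ≤ ‖Complex.exp ((δ:ℂ) * Complex.I * ↑T)‖ + ‖Complex.exp ((δ:ℂ) * Complex.I * ↑0)‖ :=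
        norm_sub_le _ _
    _ ≤ 2 := by rw [this]; norm_num

lemma intervalIntegral_ofReal_eq {a b : ℝ} {f : ℝ → ℝ} :
    (∫ x in a..b, ((f x : ℝ) : ℂ)) = ((∫ x in a..b, f x : ℝ) : ℂ) := by
  exact RCLike.intervalIntegral_ofReal

lemma key (N : ℕ) (β γ : Fin (N+1) → ℝ)
    (hinj : ∀ k l : Fin (N+1) → ℕ, ∑ i, k i = ∑ i, l i →
      ∑ i, (k i : ℝ) * (2 * π * β i) = ∑ i, (l i : ℝ) * (2 * π * β i) → k = l)
    (M : ℝ) (hM0 : 0 ≤ M) (hM : M < N + 1) :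
    ∃ x : ℝ, M < ‖∑ n, ee (2 * π * (x * β n - γ n))‖ := by
  set φ : ℝ → ℂ := fun x => ∑ n, ee (2 * π * (x * β n - γ n)) with hφ
  have hφcont : Continuous φ := by
    apply continuous_finset_sum
    intro n _
    exact continuous_ee (by fun_prop)
  -- choose the exponent p
  have hN1 : (0:ℝ) < N + 1 := by positivity
  obtain ⟨p, hp⟩ : ∃ p : ℕ, (M ^ 2) ^ p * ((p:ℝ) + 1) ^ (N + 1) < ((N:ℝ) + 1) ^ (2 * p) := by
    rcases eq_or_lt_of_le hM0 with hM0' | hM0'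
    · refine ⟨1, ?_⟩
      rw [← hM0']
      simp
      positivity
    · set s : ℝ := M ^ 2 / ((N:ℝ) + 1) ^ 2 with hs
      have hs0 : 0 < s := by positivity
      have hs1 : s < 1 := by
        rw [hs, div_lt_one (by positivity)]
        exact pow_lt_pow_left₀ hM hM0 (by norm_num)
      have htend := tendsto_pow_const_mul_const_pow_of_lt_one (N + 1) hs0.le hs1
      obtain ⟨n, hn⟩ := ((htend.eventually (gt_mem_nhds hs0)).and
        (Filter.eventually_ge_atTop 1)).exists
      obtain ⟨hn1, hn2⟩ := hn
      refine ⟨n - 1, ?_⟩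
      have hnn : n - 1 + 1 = n := Nat.succ_pred_eq_of_pos hn2
      set p := n - 1 with hpdef
      rw [← hnn] at hn1
      have h1 : ((p:ℝ) + 1) ^ (N + 1) * (s ^ p * s) < s := by
        push_cast at hn1
        rw [pow_succ s p] at hn1
        linarith [hn1]
      have h2 : ((p:ℝ) + 1) ^ (N + 1) * s ^ p < 1 :=
        lt_of_mul_lt_mul_right (by rw [one_mul]; nlinarith [h1]) hs0.le
      have h3 : s ^ p = (M ^ 2) ^ p / (((N:ℝ) + 1) ^ 2) ^ p := by
        rw [hs, div_pow]
      rw [h3] at h2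
      have h4 : ((p:ℝ) + 1) ^ (N + 1) * ((M ^ 2) ^ p / (((N:ℝ) + 1) ^ 2) ^ p) * (((N:ℝ) + 1) ^ 2) ^ p
          < 1 * (((N:ℝ) + 1) ^ 2) ^ p := by
        exact mul_lt_mul_of_pos_right h2 (by positivity)
      rw [one_mul] at h4
      have h5 : ((p:ℝ) + 1) ^ (N + 1) * (M ^ 2) ^ p < (((N:ℝ) + 1) ^ 2) ^ p := by
        calc ((p:ℝ) + 1) ^ (N + 1) * (M ^ 2) ^ p
            = ((p:ℝ) + 1) ^ (N + 1) * ((M ^ 2) ^ p / (((N:ℝ) + 1) ^ 2) ^ p)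
              * (((N:ℝ) + 1) ^ 2) ^ p := by
              field_simp
          _ < _ := h4
      calc (M ^ 2) ^ p * ((p:ℝ) + 1) ^ (N + 1) = ((p:ℝ) + 1) ^ (N + 1) * (M ^ 2) ^ p := by ring
        _ < (((N:ℝ) + 1) ^ 2) ^ p := h5
        _ = ((N:ℝ) + 1) ^ (2 * p) := by rw [← pow_mul]
  classical
  set K := Finset.piAntidiag (Finset.univ : Finset (Fin (N+1))) p with hK
  set m : (Fin (N+1) → ℕ) → ℝ := fun k => (Nat.multinomial Finset.univ k : ℝ) with hm
  set μ : (Fin (N+1) → ℕ) → ℝ := fun k => ∑ i, (k i : ℝ) * (2 * π * β i) with hμ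
  set c : (Fin (N+1) → ℕ) → ℂ := fun k => ee (-∑ i, (k i : ℝ) * (2 * π * γ i)) with hc
  have hm0 : ∀ k, 0 ≤ m k := fun k => Nat.cast_nonneg _
  have hsumK : ∀ k ∈ K, ∑ i, k i = p := by
    intro k hk
    exact ((Finset.mem_piAntidiag.1 hk).1)
  have hμinj : ∀ k ∈ K, ∀ l ∈ K, k ≠ l → μ k ≠ μ l := by
    intro k hk l hl hne heq
    exact hne (hinj k l (by rw [hsumK k hk, hsumK l hl]) heq)
  -- expansion of φ^p
  have expand : ∀ x : ℝ, φ x ^ p = ∑ k ∈ K, (m k : ℂ) * (c k * ee (x * μ k)) := by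
    intro x
    rw [hφ]
    simp only
    rw [Finset.sum_pow_eq_sum_piAntidiag]
    refine Finset.sum_congr rfl fun k hk => ?_
    have h1 : ∏ i, ee (2 * π * (x * β i - γ i)) ^ (k i)
        = ee (∑ i, (k i : ℝ) * (2 * π * (x * β i - γ i))) := by
      rw [← ee_sum]
      refine Finset.prod_congr rfl fun i _ => ee_pow _ _
    rw [h1]
    have h2 : (∑ i, (k i : ℝ) * (2 * π * (x * β i - γ i)))
        = (-∑ i, (k i : ℝ) * (2 * π * γ i)) + x * μ k := by
      rw [hμ]
      simp only [Finset.mul_sum, ← Finset.sum_neg_distrib, ← Finset.sum_add_distrib]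
      refine Finset.sum_congr rfl fun i _ => by ring
    rw [h2, ee_add, hc, hm]
    push_cast
    ring
  -- full expansion of |φ|^(2p)
  have key2 : ∀ x : ℝ, ((Complex.normSq (φ x) ^ p : ℝ) : ℂ)
      = ∑ k ∈ K, ∑ l ∈ K,
          ((m k * m l : ℝ) : ℂ) * ((c k * (starRingEnd ℂ) (c l)) * ee (x * (μ k - μ l))) := by
    intro x
    have h0 : ((Complex.normSq (φ x) ^ p : ℝ) : ℂ) = φ x ^ p * (starRingEnd ℂ) (φ x ^ p) := by
      rw [map_pow]
      push_cast
      rw [← mul_pow, Complex.mul_conj]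
    rw [h0, expand, map_sum, Finset.sum_mul_sum]
    refine Finset.sum_congr rfl fun k hk => Finset.sum_congr rfl fun l hl => ?_
    have h3 : ee (x * μ k) * ee (-(x * μ l)) = ee (x * (μ k - μ l)) := by
      rw [← ee_add]; congr 1; ring
    rw [← h3]
    simp only [map_mul, conj_ee, Complex.conj_ofReal, hc, neg_neg]
    push_cast
    ring
  -- constants D and B
  set D : ℝ := ∑ k ∈ K, m k ^ 2 with hD'
  set B : ℝ := ∑ k ∈ K, ∑ l ∈ K, (if k = l then (0:ℝ) else 2 * m k * m l / |μ k - μ l|)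
    with hB'
  have hB0 : 0 ≤ B := by
    refine Finset.sum_nonneg fun k _ => Finset.sum_nonneg fun l _ => ?_
    split
    · exact le_refl _
    · positivity
  -- the integral lower bound
  have hint : ∀ T : ℝ, D * T - B ≤ ∫ x in (0:ℝ)..T, (Complex.normSq (φ x)) ^ p := by
    intro T
    have hcont_term : ∀ (k l : Fin (N+1) → ℕ), Continuous fun x : ℝ =>
        ((m k * m l : ℝ) : ℂ) * ((c k * (starRingEnd ℂ) (c l)) * ee (x * (μ k - μ l))) := by
      intro k l
      exact continuous_const.mul (continuous_const.mul (continuous_ee (by fun_prop)))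
    have h1 : ((∫ x in (0:ℝ)..T, (Complex.normSq (φ x)) ^ p : ℝ) : ℂ)
        = ∑ k ∈ K, ∑ l ∈ K, ((m k * m l : ℝ) : ℂ) *
            ((c k * (starRingEnd ℂ) (c l)) * ∫ x in (0:ℝ)..T, ee (x * (μ k - μ l))) := by
      rw [← intervalIntegral_ofReal_eq]
      rw [show (fun x : ℝ => ((Complex.normSq (φ x) ^ p : ℝ) : ℂ))
          = fun x => ∑ k ∈ K, ∑ l ∈ K, ((m k * m l : ℝ) : ℂ) *
              ((c k * (starRingEnd ℂ) (c l)) * ee (x * (μ k - μ l))) from funext key2]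
      rw [intervalIntegral.integral_finset_sum (fun k _ =>
        (continuous_finset_sum K fun l _ => hcont_term k l).intervalIntegrable _ _)]
      refine Finset.sum_congr rfl fun k _ => ?_
      rw [intervalIntegral.integral_finset_sum (fun l _ =>
        (hcont_term k l).intervalIntegrable _ _)]
      refine Finset.sum_congr rfl fun l _ => ?_
      rw [intervalIntegral.integral_const_mul, intervalIntegral.integral_const_mul]
    have h2 := congrArg Complex.re h1
    rw [Complex.ofReal_re, Complex.re_sum] at h2
    simp only [Complex.re_sum] at h2
    have hterm : ∀ k ∈ K, ∀ l ∈ K,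
        (if k = l then m k ^ 2 * T else -(2 * m k * m l / |μ k - μ l|))
          ≤ (((m k * m l : ℝ) : ℂ) * ((c k * (starRingEnd ℂ) (c l))
              * ∫ x in (0:ℝ)..T, ee (x * (μ k - μ l)))).re := by
      intro k hk l hl
      by_cases hkl : k = l
      · subst hkl
        rw [if_pos rfl]
        have hI : (∫ x in (0:ℝ)..T, ee (x * (μ k - μ k))) = (T : ℂ) := by
          simp only [sub_self, mul_zero, ee_zero]
          rw [intervalIntegral.integral_const]
          simp
        rw [hI]
        have hck : c k * (starRingEnd ℂ) (c k) = 1 := by rw [hc]; exact mul_conj_ee _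
        rw [hck, one_mul]
        have hcast : ((m k * m k : ℝ) : ℂ) * (T : ℂ) = ((m k * m k * T : ℝ) : ℂ) := by
          push_cast; ring
        rw [hcast, Complex.ofReal_re]
        nlinarith [sq_nonneg (m k)]
      · rw [if_neg hkl]
        have hδ : μ k - μ l ≠ 0 := sub_ne_zero.2 (hμinj k hk l hl hkl)
        set z := ((m k * m l : ℝ) : ℂ) * ((c k * (starRingEnd ℂ) (c l))
            * ∫ x in (0:ℝ)..T, ee (x * (μ k - μ l))) with hz
        have hzabs : ‖z‖ ≤ m k * m l * (2 / |μ k - μ l|) := by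
          rw [hz, norm_mul, norm_mul, norm_mul]
          have ha1 : ‖((m k * m l : ℝ) : ℂ)‖ = m k * m l := by
            rw [Complex.norm_real, Real.norm_eq_abs, _root_.abs_of_nonneg (mul_nonneg (hm0 k) (hm0 l))]
          have ha2 : ‖c k‖ = 1 := by rw [hc]; exact abs_ee _
          have ha3 : ‖(starRingEnd ℂ) (c l)‖ = 1 := by
            rw [Complex.norm_conj, hc]; exact abs_ee _
          rw [ha1, ha2, ha3]
          simp only [one_mul]
          have ha4 : ‖∫ x in (0:ℝ)..T, ee (x * (μ k - μ l))‖ ≤ 2 / |μ k - μ l| := by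
            exact norm_intervalIntegral_ee hδ T
          exact mul_le_mul_of_nonneg_left ha4 (mul_nonneg (hm0 k) (hm0 l))
        have h6 := Complex.abs_re_le_norm z
        rw [abs_le] at h6
        calc -(2 * m k * m l / |μ k - μ l|) = -(m k * m l * (2 / |μ k - μ l|)) := by ring
          _ ≤ -(‖z‖) := neg_le_neg hzabs
          _ ≤ z.re := by linarith [h6.1]
    have hsumg : ∑ k ∈ K, ∑ l ∈ K,
        (if k = l then m k ^ 2 * T else -(2 * m k * m l / |μ k - μ l|)) = D * T - B := by
      have hsplit : ∀ k l : Fin (N+1) → ℕ,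
          (if k = l then m k ^ 2 * T else -(2 * m k * m l / |μ k - μ l|))
          = (if k = l then m k ^ 2 * T else 0)
            - (if k = l then (0:ℝ) else 2 * m k * m l / |μ k - μ l|) := by
        intro k l; split <;> ring
      simp_rw [hsplit, Finset.sum_sub_distrib]
      congr 1
      rw [hD', Finset.sum_mul]
      refine Finset.sum_congr rfl fun k hk => ?_
      rw [Finset.sum_ite_eq K k (fun _ => m k ^ 2 * T), if_pos hk]
    calc D * T - B = ∑ k ∈ K, ∑ l ∈ K,
          (if k = l then m k ^ 2 * T else -(2 * m k * m l / |μ k - μ l|)) := hsumg.symm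
      _ ≤ ∑ k ∈ K, ∑ l ∈ K, (((m k * m l : ℝ) : ℂ) * ((c k * (starRingEnd ℂ) (c l))
            * ∫ x in (0:ℝ)..T, ee (x * (μ k - μ l)))).re :=
          Finset.sum_le_sum fun k hk => Finset.sum_le_sum fun l hl => hterm k hk l hl
      _ = _ := h2.symm
  -- D is large
  have hsum_m : ∑ k ∈ K, m k = ((N:ℝ) + 1) ^ p := by
    have h := Finset.sum_pow_eq_sum_piAntidiag (Finset.univ : Finset (Fin (N+1)))
      (fun _ => (1:ℝ)) p
    simp only [Finset.sum_const, Finset.card_univ, Fintype.card_fin, nsmul_eq_mul, mul_one,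
      one_pow, Finset.prod_const_one] at h
    rw [hm]
    simp only
    rw [← h]
    push_cast
    ring
  have hKcard : (K.card : ℝ) ≤ ((p:ℝ) + 1) ^ (N + 1) := by
    have h : K.card ≤ (p+1)^(N+1) := by
      have hinjOn : ∀ a ∈ K, ∀ b ∈ K,
          (fun (i : Fin (N+1)) => (⟨min (a i) p, by omega⟩ : Fin (p+1)))
          = (fun (i : Fin (N+1)) => (⟨min (b i) p, by omega⟩ : Fin (p+1))) → a = b := by
        intro a ha b hb hab
        have hka : ∀ i, a i ≤ p := fun i => by
          have hma := (Finset.mem_piAntidiag.1 ha).1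
          calc a i ≤ ∑ j, a j :=
              Finset.single_le_sum (fun j _ => Nat.zero_le _) (Finset.mem_univ i)
            _ = p := hma
        have hkb : ∀ i, b i ≤ p := fun i => by
          have hmb := (Finset.mem_piAntidiag.1 hb).1
          calc b i ≤ ∑ j, b j :=
              Finset.single_le_sum (fun j _ => Nat.zero_le _) (Finset.mem_univ i)
            _ = p := hmb
        funext i
        have hi := congrFun hab i
        rw [Fin.mk.injEq, min_eq_left (hka i), min_eq_left (hkb i)] at hi
        exact hi
      calc K.card ≤ (Finset.univ : Finset (Fin (N+1) → Fin (p+1))).card :=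
          Finset.card_le_card_of_injOn _ (fun a _ => Finset.mem_univ _) hinjOn
        _ = (p+1)^(N+1) := by
          rw [Finset.card_univ, Fintype.card_fun]
          simp
    calc (K.card : ℝ) ≤ (((p+1)^(N+1) : ℕ) : ℝ) := by exact_mod_cast h
      _ = ((p:ℝ) + 1) ^ (N + 1) := by push_cast; ring
  have hKpos : 0 < K.card := by
    rcases Finset.eq_empty_or_nonempty K with h | h
    · exfalso
      rw [h, Finset.sum_empty] at hsum_m
      have : (0:ℝ) < ((N:ℝ) + 1) ^ p := by positivity
      linarith
    · exact Finset.card_pos.2 h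
  have hDlarge : (M ^ 2) ^ p < D := by
    have hcs := Finset.sum_mul_sq_le_sq_mul_sq K m (fun _ => (1:ℝ))
    simp only [mul_one, one_pow, Finset.sum_const, nsmul_eq_mul] at hcs
    rw [hsum_m] at hcs
    have h1 : ((N:ℝ) + 1) ^ (2 * p) ≤ D * K.card := by
      calc ((N:ℝ) + 1) ^ (2 * p) = (((N:ℝ) + 1) ^ p) ^ 2 := by rw [← pow_mul, mul_comm]
        _ ≤ D * K.card := by
            calc (((N:ℝ) + 1) ^ p) ^ 2 ≤ (∑ k ∈ K, m k ^ 2) * K.card := hcs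
              _ = D * K.card := by rw [← hD']
    have h2 : (M ^ 2) ^ p * K.card < D * K.card := by
      calc (M ^ 2) ^ p * (K.card : ℝ) ≤ (M ^ 2) ^ p * (((p:ℝ) + 1) ^ (N + 1)) := by
            apply mul_le_mul_of_nonneg_left hKcard (by positivity)
        _ < ((N:ℝ) + 1) ^ (2 * p) := hp
        _ ≤ D * K.card := h1
    exact lt_of_mul_lt_mul_right h2 (Nat.cast_nonneg _)
  -- choose T and conclude
  by_contra hcon
  push_neg at hcon
  set T : ℝ := max 1 ((B + 1) / (D - (M ^ 2) ^ p)) with hT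
  have hT0 : (0:ℝ) < T := lt_of_lt_of_le one_pos (le_max_left _ _)
  have hTgt : (M ^ 2) ^ p * T < D * T - B := by
    have hd : 0 < D - (M ^ 2) ^ p := by linarith
    have h1 : (B + 1) / (D - (M ^ 2) ^ p) ≤ T := le_max_right _ _
    have h2 : B + 1 ≤ (D - (M ^ 2) ^ p) * T := by
      rw [← div_le_iff₀' hd]
      exact h1
    nlinarith
  have hub : ∀ x : ℝ, (Complex.normSq (φ x)) ^ p ≤ (M ^ 2) ^ p := by
    intro x
    apply pow_le_pow_left₀ (Complex.normSq_nonneg _)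
    rw [Complex.normSq_eq_norm_sq]
    exact pow_le_pow_left₀ (norm_nonneg _) (hcon x) 2
  have hint2 : ∫ x in (0:ℝ)..T, (Complex.normSq (φ x)) ^ p ≤ (M ^ 2) ^ p * T := by
    have hle := intervalIntegral.integral_mono_on hT0.le
      (((by exact (Complex.continuous_normSq.comp hφcont).pow p :
        Continuous fun x => Complex.normSq (φ x) ^ p)).intervalIntegrable 0 T)
      ((intervalIntegrable_const : IntervalIntegrable (fun _ : ℝ => (M ^ 2) ^ p) MeasureTheory.volume 0 T))
      (fun x _ => hub x)
    rw [intervalIntegral.integral_const, smul_eq_mul, sub_zero] at hle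
    linarith [hle]
  have := hint T
  linarith


lemma indep_aux (N : ℕ) (lam : Fin N → ℝ) (hind : LinearIndependent ℚ lam)
    (k l : Fin (N+1) → ℕ) (hsum : ∑ i, k i = ∑ i, l i)
    (hμ : ∑ i, (k i : ℝ) * (2 * π * ((Fin.cons (0:ℝ) lam : Fin (N+1) → ℝ) i))
      = ∑ i, (l i : ℝ) * (2 * π * ((Fin.cons (0:ℝ) lam : Fin (N+1) → ℝ) i))) :
    k = l := by
  set β : Fin (N+1) → ℝ := (Fin.cons (0:ℝ) lam : Fin (N+1) → ℝ) with hβ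
  have h2π : (2 * π) ≠ 0 := by positivity
  have h0 : ∑ i, ((k i : ℝ) - l i) * β i = 0 := by
    have h := sub_eq_zero.2 hμ
    rw [← Finset.sum_sub_distrib] at h
    have h' : ∑ i, (((k i : ℝ) - l i) * β i) * (2 * π) = 0 := by
      rw [← h]; congr 1; funext i; ring
    rw [← Finset.sum_mul] at h'
    exact (mul_eq_zero.1 h').resolve_right h2π
  have htail : ∀ i : Fin N, (k i.succ : ℝ) - l i.succ = 0 := by
    have h1 : ∑ i : Fin N, (((k i.succ : ℚ) - l i.succ)) • lam i = 0 := by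
      have h2 : ∑ i : Fin N, ((k i.succ : ℝ) - l i.succ) * lam i = 0 := by
        rw [Fin.sum_univ_succ] at h0
        simpa [hβ] using h0
      rw [← h2]
      refine Finset.sum_congr rfl fun i _ => ?_
      rw [Rat.smul_def]
      push_cast
      ring
    intro i
    have h3 := Fintype.linearIndependent_iff.1 hind _ h1 i
    have h4 : ((k i.succ : ℚ) - l i.succ) = 0 := h3
    exact_mod_cast congrArg (fun q : ℚ => (q : ℝ)) h4
  have htail' : ∀ i : Fin N, k i.succ = l i.succ := by
    intro i
    have h5 := htail i
    have h6 : (k i.succ : ℝ) = l i.succ := by linarith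
    exact_mod_cast h6
  have h00 : k 0 = l 0 := by
    rw [Fin.sum_univ_succ, Fin.sum_univ_succ] at hsum
    have h7 : ∑ i : Fin N, k i.succ = ∑ i : Fin N, l i.succ :=
      Finset.sum_congr rfl fun i _ => htail' i
    omega
  funext i
  refine Fin.cases h00 htail' i

set_option autoImplicit false

theorem kronecker_approximation (N : ℕ) (lam : Fin N → ℝ)
    (hind : LinearIndependent ℚ lam) (α : Fin N → ℝ) (ε : ℝ) (hε : 0 < ε) :
    ∃ x₀ : ℝ, ∀ n : Fin N,
      |x₀ * lam n - α n - round (x₀ * lam n - α n)| < ε := by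
  have hπ := Real.pi_pos
  set β : Fin (N+1) → ℝ := (Fin.cons (0:ℝ) lam : Fin (N+1) → ℝ) with hβ
  set γ : Fin (N+1) → ℝ := (Fin.cons (0:ℝ) α : Fin (N+1) → ℝ) with hγ
  set ε' : ℝ := min ε (1/2) with hε'
  have hε'0 : 0 < ε' := lt_min hε (by norm_num)
  have hε'12 : ε' ≤ 1/2 := min_le_right _ _
  have hε'ε : ε' ≤ ε := min_le_left _ _
  set η : ℝ := (1 - Real.cos (2*π*ε')) / 2 with hη
  have hcosval : Real.cos (2*π*ε') = 1 - 2*η := by rw [hη]; ring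
  have h2πε' : 0 < 2*π*ε' := by positivity
  have h2πε'pi : 2*π*ε' ≤ π := by nlinarith
  have hη0 : 0 < η := by
    have h := Real.cos_lt_cos_of_nonneg_of_le_pi (le_refl 0) h2πε'pi h2πε'
    rw [Real.cos_zero] at h
    rw [hη]
    linarith
  have hη1 : η ≤ 1 := by
    have := Real.neg_one_le_cos (2*π*ε')
    rw [hη]; linarith
  obtain ⟨x, hx⟩ := key N β γ
    (fun k l h1 h2 => indep_aux N lam hind k l h1 h2)
    ((N:ℝ) + 1 - η)
    (by push_cast; have : (0:ℝ) ≤ (N:ℝ) := Nat.cast_nonneg _; linarith)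
    (by linarith)
  refine ⟨x, fun n => ?_⟩
  set θ : ℝ := x * lam n - α n with hθ
  set r : ℝ := θ - round θ with hr
  have hr2 : |r| ≤ 1/2 := abs_sub_round θ
  -- split off the two relevant terms
  have hmem : (Fin.succ n : Fin (N+1)) ∈ (Finset.univ.erase (0 : Fin (N+1))) :=
    Finset.mem_erase.2 ⟨Fin.succ_ne_zero n, Finset.mem_univ _⟩
  have hsplit : ∑ i : Fin (N+1), ee (2*π*(x * β i - γ i))
      = (ee (2*π*(x * β 0 - γ 0)) + ee (2*π*(x * β (Fin.succ n) - γ (Fin.succ n))))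
        + ∑ i ∈ ((Finset.univ.erase (0 : Fin (N+1))).erase (Fin.succ n)),
            ee (2*π*(x * β i - γ i)) := by
    rw [← Finset.add_sum_erase _ _ (Finset.mem_univ (0 : Fin (N+1)))]
    rw [← Finset.add_sum_erase _ _ hmem]
    ring
  have hval0 : ee (2*π*(x * β 0 - γ 0)) = 1 := by
    rw [hβ, hγ]
    simp [Fin.cons_zero, ee_zero]
  have hvaln : (2*π*(x * β (Fin.succ n) - γ (Fin.succ n))) = 2*π*θ := by
    rw [hβ, hγ, hθ]
    simp [Fin.cons_succ]
  have hcard : (((Finset.univ.erase (0 : Fin (N+1))).erase (Fin.succ n)).card : ℝ)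
      = (N:ℝ) - 1 := by
    rw [Finset.card_erase_of_mem hmem, Finset.card_erase_of_mem (Finset.mem_univ _)]
    rw [Finset.card_univ, Fintype.card_fin]
    have hN1 : 1 ≤ N := Fin.pos n
    have h9 : N + 1 - 1 - 1 = N - 1 := by omega
    rw [h9, Nat.cast_sub hN1]
    simp
  have htri : ‖∑ i : Fin (N+1), ee (2*π*(x * β i - γ i))‖
      ≤ ‖1 + ee (2*π*θ)‖ + ((N:ℝ) - 1) := by
    rw [hsplit, hval0, hvaln]
    have h1 := norm_add_le (1 + ee (2*π*θ))
      (∑ i ∈ ((Finset.univ.erase (0 : Fin (N+1))).erase (Fin.succ n)),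
        ee (2*π*(x * β i - γ i)))
    have h2 : ‖∑ i ∈ ((Finset.univ.erase (0 : Fin (N+1))).erase (Fin.succ n)),
        ee (2*π*(x * β i - γ i))‖ ≤ ((N:ℝ) - 1) := by
      calc ‖∑ i ∈ ((Finset.univ.erase (0 : Fin (N+1))).erase (Fin.succ n)),
            ee (2*π*(x * β i - γ i))‖
          ≤ ∑ i ∈ ((Finset.univ.erase (0 : Fin (N+1))).erase (Fin.succ n)),
            ‖ee (2*π*(x * β i - γ i))‖ := norm_sum_le _ _
        _ = ∑ i ∈ ((Finset.univ.erase (0 : Fin (N+1))).erase (Fin.succ n)), (1:ℝ) :=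
            Finset.sum_congr rfl fun i _ => abs_ee _
        _ = ((N:ℝ) - 1) := by rw [Finset.sum_const, nsmul_eq_mul, mul_one, hcard]
    linarith
  have hlow : 2 - η < ‖1 + ee (2*π*θ)‖ := by linarith
  have heer : ee (2*π*θ) = ee (2*π*r) := by
    have h1 : (2*π*θ) = 2*π*r + 2*π*((round θ : ℤ) : ℝ) := by rw [hr]; push_cast; ring
    rw [h1, ee_add]
    have h2 : ee (2*π*((round θ : ℤ) : ℝ)) = 1 := by
      rw [ee, show ((2*π*((round θ:ℤ):ℝ) : ℝ) : ℂ) * Complex.I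
          = ((round θ : ℤ) : ℂ) * (2*(π:ℂ)*Complex.I) by push_cast; ring]
      exact Complex.exp_int_mul_two_pi_mul_I _
    rw [h2, mul_one]
  have habs2 : (‖1 + ee (2*π*r)‖)^2 = 2 + 2*Real.cos (2*π*r) := by
    rw [← Complex.normSq_eq_norm_sq, normSq_one_add_ee]
  have hsq : (2 - η)^2 < 2 + 2*Real.cos (2*π*r) := by
    rw [← habs2]
    rw [heer] at hlow
    exact pow_lt_pow_left₀ hlow (by linarith) (by norm_num)
  have hcos2 : Real.cos (2*π*ε') < Real.cos (2*π*r) := by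
    rw [hcosval]
    nlinarith [hsq]
  have hrε' : |r| < ε' := by
    by_contra hge
    push_neg at hge
    have h1 : Real.cos (2*π*|r|) ≤ Real.cos (2*π*ε') :=
      Real.cos_le_cos_of_nonneg_of_le_pi (by positivity) (by nlinarith [hr2])
        (by nlinarith [hge])
    have h2 : Real.cos (2*π*|r|) = Real.cos (2*π*r) := by
      rw [show 2*π*|r| = |2*π*r| by
        rw [abs_mul, abs_of_pos (by positivity : (0:ℝ) < 2*π)], Real.cos_abs]
    linarith
  exact lt_of_lt_of_le hrε' hε'ε
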